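/- Let α > 0 and δ > 0. There exists ε > 0, depending only on α and δ, such that the following holds: for every pair G₁, G₂ of Borel probability measures on ℝ supported on the open interval (0,1), mutually absolutely continuous, whose Radon–Nikodym derivative dG₁/dG₂ equals the function r ↦ α(1−r)/r G₂-almost everywhere, and whose total variation distance sup_{E Borel} |G₁(E) − G₂(E)| is at least δ, one has ∫ r dG₂(r) − ∫ r dG₁(r) ≥ ε. -/

import Mathlib

open MeasureTheory

/-- The total variation distance between two measures on `ℝ`, as the supremum over
Borel subsets of `[0,1]` of the absolute difference of the measures. -/
noncomputable def tvDist (G₁ G₂ : Measure ℝ) : ℝ :=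
  sSup {d : ℝ | ∃ E : Set ℝ, MeasurableSet E ∧ E ⊆ Set.Icc (0 : ℝ) 1 ∧
    d = |(G₁ E).toReal - (G₂ E).toReal|}

set_option maxHeartbeats 2000000 in
/-- Lemma A.4: for every `α > 0` and `δ > 0` there is `ε > 0`, depending only on
`α` and `δ`, such that for every pair of belief distributions `G₁, G₂` satisfying
Bayes' rule with prior odds `α` and total variation distance at least `δ`, the
means are separated by at least `ε`. -/
theorem bayes_uniform_mean_gap
    {α δ : ℝ} (hα : 0 < α) (hδ : 0 < δ) :
    ∃ ε > 0, ∀ G₁ G₂ : Measure ℝ,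
      IsProbabilityMeasure G₁ → IsProbabilityMeasure G₂ →
      G₁ (Set.Ioo (0 : ℝ) 1)ᶜ = 0 → G₂ (Set.Ioo (0 : ℝ) 1)ᶜ = 0 →
      G₁ ≪ G₂ → G₂ ≪ G₁ →
      (G₁.rnDeriv G₂ =ᵐ[G₂] fun r => ENNReal.ofReal (α * ((1 - r) / r))) →
      δ ≤ tvDist G₁ G₂ →
      ε ≤ (∫ r, r ∂G₂) - ∫ r, r ∂G₁ := by
  have h1α : (0 : ℝ) < 1 + α := by linarith
  set p : ℝ := α / (1 + α) with hp
  have hp0 : 0 < p := div_pos hα h1α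
  have hp1 : p < 1 := by rw [div_lt_one h1α]; linarith
  refine ⟨4 * α * δ ^ 2 / (1 + α) ^ 2, by positivity, ?_⟩
  intro G₁ G₂ hP1 hP2 hS1 hS2 hac12 hac21 hrn htv
  set h : ℝ → ℝ := fun r => α * ((1 - r) / r) with hhdef
  have hmeas_h : Measurable h :=
    (measurable_const.mul ((measurable_const.sub measurable_id).div measurable_id))
  have hfmeas : Measurable fun r : ℝ => ENNReal.ofReal (h r) := hmeas_h.ennreal_ofReal
  -- a.e. the mass is in (0,1)
  have hae : ∀ᵐ r ∂G₂, r ∈ Set.Ioo (0 : ℝ) 1 := by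
    rw [ae_iff]
    exact hS2
  -- G₁ is G₂ with density h
  have hG1 : G₂.withDensity (fun r => ENNReal.ofReal (h r)) = G₁ :=
    (withDensity_congr_ae hrn).symm.trans (Measure.withDensity_rnDeriv_eq G₁ G₂ hac12)
  -- lintegral of the density is 1
  have hL : ∫⁻ r, ENNReal.ofReal (h r) ∂G₂ = 1 := by
    have := congrArg (fun μ : Measure ℝ => μ Set.univ) hG1
    simpa [withDensity_apply _ MeasurableSet.univ] using this
  have hh_nonneg : 0 ≤ᵐ[G₂] h := by
    filter_upwards [hae] with r hr
    exact mul_nonneg hα.le (div_nonneg (by linarith [hr.2]) hr.1.le)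
  have hInt_h_eq : ∫ r, h r ∂G₂ = 1 := by
    rw [integral_eq_lintegral_of_nonneg_ae hh_nonneg hmeas_h.aestronglyMeasurable, hL]
    simp
  have hInt_h : Integrable h G₂ := by
    refine (integrable_toReal_of_lintegral_ne_top hfmeas.aemeasurable
      (by rw [hL]; exact ENNReal.one_ne_top)).congr ?_
    filter_upwards [hh_nonneg] with r hr
    exact ENNReal.toReal_ofReal hr
  -- the integral of 1/r
  have heq_inv : (fun r : ℝ => 1 / r) =ᵐ[G₂] fun r => h r / α + 1 := by
    filter_upwards [hae] with r hr
    have hr0 : r ≠ 0 := ne_of_gt hr.1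
    simp only [hhdef]
    field_simp
    ring
  have hInt_inv : Integrable (fun r : ℝ => 1 / r) G₂ :=
    ((hInt_h.div_const α).add (integrable_const 1)).congr heq_inv.symm
  have hC : ∫ r, 1 / r ∂G₂ = (1 + α) / α := by
    rw [integral_congr_ae heq_inv,
      integral_add (hInt_h.div_const α) (integrable_const 1), integral_div, hInt_h_eq]
    simp
    field_simp
  -- integrability of the identity
  have hInt_id : Integrable (fun r : ℝ => r) G₂ := by
    refine Integrable.mono' (integrable_const 1) measurable_id.aestronglyMeasurable ?_
    filter_upwards [hae] with r hr
    rw [Real.norm_eq_abs, abs_of_pos hr.1]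
    exact hr.2.le
  -- the mean under G₁
  have hm1 : ∫ r, r ∂G₁ = α * (1 - ∫ r, r ∂G₂) := by
    rw [← hG1]
    have hrw : (fun r : ℝ => ENNReal.ofReal (h r))
        = fun r => (((fun r => (h r).toNNReal) r : NNReal) : ENNReal) := rfl
    rw [hrw, integral_withDensity_eq_integral_smul hmeas_h.real_toNNReal]
    have : (fun r : ℝ => (h r).toNNReal • r) =ᵐ[G₂] fun r => α * 1 - α * r := by
      filter_upwards [hae, hh_nonneg] with r hr hr'
      have hr0 : r ≠ 0 := ne_of_gt hr.1
      rw [NNReal.smul_def, smul_eq_mul, Real.coe_toNNReal _ hr']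
      simp only [hhdef]
      field_simp
    rw [integral_congr_ae this,
      integral_sub ((integrable_const (1:ℝ)).const_mul α) (hInt_id.const_mul α),
      integral_const_mul, integral_const_mul, integral_const]
    simp [mul_sub]
  -- the quadratic integrand
  set q : ℝ → ℝ := fun r => (r - p) ^ 2 / r with hqdef
  set a : ℝ → ℝ := fun r => |r - p| / r with hadef
  have hbound : ∀ᵐ r ∂G₂, |r - p| ≤ 1 ∧ 0 < r := by
    filter_upwards [hae] with r hr
    constructor
    · rw [abs_le]; constructor <;> nlinarith [hr.1, hr.2]
    · exact hr.1
  have hmeas_q : Measurable q :=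
    ((measurable_id.sub measurable_const).pow_const 2).div measurable_id
  have hmeas_a : Measurable a :=
    (measurable_id.sub measurable_const).abs.div measurable_id
  have hInt_q : Integrable q G₂ := by
    refine Integrable.mono' hInt_inv hmeas_q.aestronglyMeasurable ?_
    filter_upwards [hbound] with r hr
    rw [Real.norm_eq_abs, hqdef]
    have h1 : (r - p) ^ 2 ≤ 1 := by nlinarith [hr.1, abs_nonneg (r - p), sq_abs (r - p)]
    rw [abs_of_nonneg (div_nonneg (sq_nonneg _) hr.2.le)]
    gcongr
    exact hr.2.le
  have hInt_a : Integrable a G₂ := by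
    refine Integrable.mono' hInt_inv hmeas_a.aestronglyMeasurable ?_
    filter_upwards [hbound] with r hr
    rw [Real.norm_eq_abs, hadef]
    rw [abs_of_nonneg (div_nonneg (abs_nonneg _) hr.2.le)]
    gcongr
    exacts [hr.2.le, hr.1]
  set B : ℝ := ∫ r, q r ∂G₂ with hBdef
  set A : ℝ := ∫ r, a r ∂G₂ with hAdef
  have hB_eq : B = (∫ r, r ∂G₂) - 2 * p + p ^ 2 * ((1 + α) / α) := by
    have hptw : q =ᵐ[G₂] fun r => (r - 2 * p) + p ^ 2 * (1 / r) := by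
      filter_upwards [hae] with r hr
      have hr0 : r ≠ 0 := ne_of_gt hr.1
      simp only [hqdef]
      field_simp
      ring
    have i1 : Integrable (fun r : ℝ => r - 2 * p) G₂ :=
      hInt_id.sub (integrable_const _)
    have i2 : Integrable (fun r : ℝ => p ^ 2 * (1 / r)) G₂ :=
      hInt_inv.const_mul _
    rw [hBdef, integral_congr_ae hptw, integral_add i1 i2,
      integral_sub hInt_id (integrable_const (2 * p)), integral_const,
      integral_const_mul, hC]
    simp
  -- total variation bound
  set g : ℝ → ℝ := fun r => h r - 1 with hgdef
  have hInt_g : Integrable g G₂ := hInt_h.sub (integrable_const 1)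
  have hg0 : ∫ r, g r ∂G₂ = 0 := by
    rw [hgdef]
    rw [integral_sub hInt_h (integrable_const 1), hInt_h_eq, integral_const]
    simp
  have habs_g : (fun r => |g r|) =ᵐ[G₂] fun r => (1 + α) * a r := by
    filter_upwards [hae] with r hr
    have hr0 : r ≠ 0 := ne_of_gt hr.1
    have hge : g r = (1 + α) * ((p - r) / r) := by
      simp only [hgdef, hhdef, hp]
      field_simp
      ring
    rw [hge, abs_mul, abs_of_pos h1α, abs_div, abs_of_pos hr.1, hadef, abs_sub_comm]
  have hIabs : ∫ r, |g r| ∂G₂ = (1 + α) * A := by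
    rw [integral_congr_ae habs_g, integral_const_mul]
  -- tvDist is at most half the L¹ distance of the densities
  have htv_le : tvDist G₁ G₂ ≤ (1 + α) * A / 2 := by
    have hInt_gabs : Integrable (fun r => |g r|) G₂ := hInt_g.abs
    refine Real.sSup_le ?_ ?_
    · rintro d ⟨E, hE, -, rfl⟩
      have hG1E : (G₁ E).toReal = ∫ r in E, h r ∂G₂ := by
        rw [← hG1, withDensity_apply _ hE,
          integral_eq_lintegral_of_nonneg_ae (ae_restrict_of_ae hh_nonneg)
            hmeas_h.aestronglyMeasurable.restrict]
      have hG2E : (G₂ E).toReal = ∫ r in E, (1 : ℝ) ∂G₂ := by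
        rw [setIntegral_const, smul_eq_mul, mul_one]; rfl
      have hdiff : (G₁ E).toReal - (G₂ E).toReal = ∫ r in E, g r ∂G₂ := by
        rw [hG1E, hG2E,
          ← integral_sub hInt_h.integrableOn (integrable_const 1).integrableOn]
      rw [hdiff, ← hIabs, abs_le]
      have key : ∀ φ : ℝ → ℝ, Integrable φ G₂ → (∫ r, φ r ∂G₂ = 0) →
          ∫ r in E, φ r ∂G₂ ≤ (∫ r, |φ r| ∂G₂) / 2 := by
        intro φ hφ hφ0
        have h1 : ∫ r in E, φ r ∂G₂ ≤ ∫ r in E, (φ r + |φ r|) / 2 ∂G₂ := by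
          refine integral_mono_ae hφ.integrableOn
            ((hφ.add hφ.abs).div_const 2).integrableOn ?_
          refine Filter.Eventually.of_forall fun r => ?_
          have h1 := neg_abs_le (φ r)
          have h2 := le_abs_self (φ r)
          linarith
        have h2 : ∫ r in E, (φ r + |φ r|) / 2 ∂G₂ ≤ ∫ r, (φ r + |φ r|) / 2 ∂G₂ := by
          refine setIntegral_le_integral ((hφ.add hφ.abs).div_const 2) ?_
          refine Filter.Eventually.of_forall fun r => ?_
          have h1 := neg_abs_le (φ r)
          simp only [Pi.zero_apply]
          linarith
        have h3 : ∫ r, (φ r + |φ r|) / 2 ∂G₂ = (∫ r, |φ r| ∂G₂) / 2 := by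
          rw [integral_div, integral_add hφ hφ.abs, hφ0, zero_add]
        linarith
      constructor
      · have := key (fun r => -g r) hInt_g.neg (by rw [integral_neg, hg0, neg_zero])
        simp only [integral_neg, abs_neg] at this
        linarith
      · exact key g hInt_g hg0
    · have hA0 : 0 ≤ A := by
        refine integral_nonneg_of_ae ?_
        filter_upwards [hbound] with r hr
        exact div_nonneg (abs_nonneg _) hr.2.le
      nlinarith
  have hA_ge : 2 * δ / (1 + α) ≤ A := by
    rw [div_le_iff₀ h1α]
    nlinarith [htv.trans htv_le]
  set t : ℝ := 2 * α * δ / (1 + α) ^ 2 with htdef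
  have ht0 : 0 < t := by positivity
  -- AM–GM / Cauchy–Schwarz step
  have hAM : 2 * t * A ≤ B + t ^ 2 * ((1 + α) / α) := by
    have hptw : ∀ᵐ r ∂G₂, 2 * t * a r ≤ q r + t ^ 2 * (1 / r) := by
      filter_upwards [hae] with r hr
      have hr0 : 0 < r := hr.1
      have e1 : 2 * t * a r = (2 * t * |r - p|) / r := by rw [hadef]; ring
      have e2 : q r + t ^ 2 * (1 / r) = ((r - p) ^ 2 + t ^ 2) / r := by
        rw [hqdef]; ring
      rw [e1, e2]
      gcongr
      have key := sq_nonneg (|r - p| - t)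
      rw [sub_sq, sq_abs] at key
      linarith
    have hmono : ∫ r, 2 * t * a r ∂G₂ ≤ ∫ r, (q r + t ^ 2 * (1 / r)) ∂G₂ :=
      integral_mono_ae (hInt_a.const_mul _) (hInt_q.add (hInt_inv.const_mul _)) hptw
    rw [integral_const_mul, integral_add hInt_q (hInt_inv.const_mul _),
      integral_const_mul, hC] at hmono
    exact hmono
  clear_value A B t
  have hBge : 4 * α * δ ^ 2 / (1 + α) ^ 3 ≤ B := by
    have h1 : 2 * t * (2 * δ / (1 + α)) ≤ 2 * t * A :=
      mul_le_mul_of_nonneg_left hA_ge (by positivity)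
    have e1 : 2 * t * (2 * δ / (1 + α)) = 8 * (α * δ ^ 2 / (1 + α) ^ 3) := by
      rw [htdef]; field_simp; ring
    have e2 : t ^ 2 * ((1 + α) / α) = 4 * (α * δ ^ 2 / (1 + α) ^ 3) := by
      rw [htdef]; field_simp; ring
    have e0 : 4 * α * δ ^ 2 / (1 + α) ^ 3 = 4 * (α * δ ^ 2 / (1 + α) ^ 3) := by
      ring
    rw [e1] at h1
    rw [e2] at hAM
    rw [e0]
    linarith
  have e3 : (1 + α) * B = (∫ r, r ∂G₂) - α * (1 - ∫ r, r ∂G₂) := by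
    rw [hB_eq, hp]; field_simp; ring
  have e4 : (1 + α) * (4 * α * δ ^ 2 / (1 + α) ^ 3) = 4 * α * δ ^ 2 / (1 + α) ^ 2 := by
    field_simp
  rw [hm1]
  nlinarith [mul_le_mul_of_nonneg_left hBge h1α.le]
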